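/- Let K be an algebraically closed field of characteristic p > 0 and f ∈ K[[x]] with multiplicity m(f) = p and finite Milnor number μ, so q := μ + 1 is the smallest exponent in supp(f) not divisible by p. Set k := ⌈(q − p)/(p − 1)⌉ and d := q + k − 1. Then f is right equivalent to x^p + Σ_{n ∈ Λ} λ_n x^n for suitable λ_n ∈ K, where Λ = {n : q ≤ n ≤ d, p ∤ n}, and #Λ = ⌊q/p⌋ = ⌊μ/p⌋. -/

import Mathlib

open PowerSeries Finset

namespace NF

variable {K : Type*} [Field K]





theorem coeff_pow_eq_zero {w : PowerSeries K} (hw : constantCoeff w = 0)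
    {M N : ℕ} (h : N < M) : coeff N (w ^ M) = 0 := by
  have hX : (X : PowerSeries K) ^ M ∣ w ^ M := pow_dvd_pow_of_dvd (X_dvd_iff.mpr hw) M
  exact (X_pow_dvd_iff.mp hX) N h

theorem coeff_pow_self {w : PowerSeries K} (hw : constantCoeff w = 0) (M : ℕ) :
    coeff M (w ^ M) = (coeff 1 w) ^ M := by
  induction M with
  | zero => simp
  | succ M ih =>
    rw [pow_succ, coeff_mul, Finset.sum_eq_single (M, 1)]
    · rw [ih, pow_succ]
    · rintro ⟨a, b⟩ hab hne
      rw [Finset.HasAntidiagonal.mem_antidiagonal] at hab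
      rcases lt_or_ge a M with h | h
      · rw [coeff_pow_eq_zero hw h, zero_mul]
      · have hb : b = 0 ∨ (a = M ∧ b = 1) := by omega
        rcases hb with hb | hb
        · subst hb; rw [coeff_zero_eq_constantCoeff, hw, mul_zero]
        · exact absurd (by simp [hb.1, hb.2]) hne
    · intro h
      exact absurd (Finset.HasAntidiagonal.mem_antidiagonal.mpr (by simp)) h

theorem coeff_pow_congr {w₁ w₂ : PowerSeries K} (h0 : constantCoeff w₁ = 0)
    (h0' : constantCoeff w₂ = 0) :
    ∀ M N, 1 ≤ M → (∀ s ≤ N - M + 1, coeff s w₁ = coeff s w₂) →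
      coeff N (w₁ ^ M) = coeff N (w₂ ^ M) := by
  intro M
  induction M with
  | zero => intro N h; omega
  | succ M ih =>
    intro N _ hag
    rcases Nat.eq_zero_or_pos M with rfl | hM
    · simpa using hag N (by omega)
    rcases lt_or_ge N (M + 1) with h | h
    · rw [coeff_pow_eq_zero h0 h, coeff_pow_eq_zero h0' h]
    rw [pow_succ, pow_succ, coeff_mul, coeff_mul]
    apply Finset.sum_congr rfl
    rintro ⟨a, b⟩ hab
    rw [Finset.HasAntidiagonal.mem_antidiagonal] at hab
    rcases lt_or_ge a M with ha | ha
    · rw [coeff_pow_eq_zero h0 ha, coeff_pow_eq_zero h0' ha, zero_mul, zero_mul]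
    rcases Nat.eq_zero_or_pos b with rfl | hb
    · rw [coeff_zero_eq_constantCoeff, h0, h0', mul_zero, mul_zero]
    have h1 : coeff a (w₁ ^ M) = coeff a (w₂ ^ M) :=
      ih a hM (fun s hs => hag s (by omega))
    have h2 : coeff b w₁ = coeff b w₂ := hag b (by omega)
    rw [h1, h2]

theorem eq_C_add_X_mul_shift (w : PowerSeries K) :
    w = C (constantCoeff w) + X * PowerSeries.mk (fun i => coeff (i + 1) w) := by
  ext n
  cases n with
  | zero => simp
  | succ n => simp [coeff_succ_X_mul, coeff_C]

theorem coeff_pow_char (p : ℕ) (hp : p.Prime) [CharP K p] :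
    ∀ (N : ℕ) (w : PowerSeries K),
      coeff N (w ^ p) = if p ∣ N then (coeff (N / p) w) ^ p else 0 := by
  haveI hCP : CharP (PowerSeries K) p :=
    charP_of_injective_ringHom (f := C) C_injective p
  haveI := Fact.mk hp
  haveI : ExpChar (PowerSeries K) p := inferInstance
  intro N
  induction N using Nat.strong_induction_on with
  | _ N ih =>
    intro w
    have hdec := eq_C_add_X_mul_shift w
    set c0 := constantCoeff w
    set tw := PowerSeries.mk (fun i => coeff (i + 1) w) with htw
    have hwp : w ^ p = C (c0 ^ p) + X ^ p * tw ^ p := by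
      conv_lhs => rw [hdec]
      rw [add_pow_char, ← mul_pow, map_pow]
    rcases Nat.eq_zero_or_pos N with rfl | hN
    · simp [hwp, coeff_X_pow_mul', hp.pos.ne', hp.ne_zero]; rfl
    rw [hwp, map_add, coeff_C, if_neg (by omega), zero_add, coeff_X_pow_mul']
    rcases lt_or_ge N p with h | h
    · rw [if_neg (by omega), if_neg (fun hdvd => by
        have := Nat.le_of_dvd hN hdvd; omega)]
    rw [if_pos h, ih (N - p) (by have := hp.two_le; omega) tw]
    have hdd : p ∣ N - p ↔ p ∣ N := by
      constructor
      · intro ⟨c, hc⟩; exact ⟨c + 1, by rw [Nat.mul_succ]; omega⟩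
      · intro ⟨c, hc⟩
        have hc1 : 1 ≤ c := by nlinarith [hp.two_le]
        exact ⟨c - 1, by rw [Nat.mul_sub, mul_one]; omega⟩
    by_cases hdvd : p ∣ N
    · rw [if_pos (hdd.mpr hdvd), if_pos hdvd, htw]
      have harg : (N - p) / p + 1 = N / p := by
        obtain ⟨c, rfl⟩ := hdvd
        have hc : 1 ≤ c := by nlinarith [hp.two_le]
        have h1 : (p * c - p) = p * (c - 1) := by rw [Nat.mul_sub, mul_one]
        rw [h1, Nat.mul_div_cancel_left _ hp.pos, Nat.mul_div_cancel_left _ hp.pos]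
        omega
      simp [harg]
    · rw [if_neg (fun hh => hdvd (hdd.mp hh)), if_neg hdvd]

noncomputable def substFun (w f : PowerSeries K) : PowerSeries K :=
  PowerSeries.mk fun n => ∑ j ∈ Finset.range (n + 1), coeff j f * coeff n (w ^ j)

theorem coeff_substFun (w f : PowerSeries K) (n : ℕ) :
    coeff n (substFun w f) = ∑ j ∈ Finset.range (n + 1), coeff j f * coeff n (w ^ j) :=
  coeff_mk n _

theorem coeff_aeval {w : PowerSeries K} (hw : constantCoeff w = 0) (P : Polynomial K) (n : ℕ) :
    coeff n (Polynomial.aeval w P) = ∑ j ∈ Finset.range (n + 1), P.coeff j * coeff n (w ^ j) := by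
  induction P using Polynomial.induction_on' with
  | add P Q hP hQ => simp [hP, hQ, Finset.sum_add_distrib, add_mul]
  | monomial k a =>
    rw [Polynomial.aeval_monomial]
    have : (algebraMap K (PowerSeries K)) a = C a := rfl
    rw [this]
    rcases le_or_gt k n with h | h
    · rw [coeff_C_mul]
      rw [Finset.sum_eq_single k]
      · rw [Polynomial.coeff_monomial, if_pos rfl]
      · intro j _ hj; rw [Polynomial.coeff_monomial, if_neg (Ne.symm hj), zero_mul]
      · intro hk; exact absurd (Finset.mem_range.mpr (by omega)) hk
    · rw [coeff_C_mul, coeff_pow_eq_zero hw h, mul_zero]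
      apply (Finset.sum_eq_zero _).symm
      intro j hj; rw [Finset.mem_range] at hj
      rw [Polynomial.coeff_monomial, if_neg (by omega), zero_mul]

theorem coeff_substFun_trunc {w : PowerSeries K} (hw : constantCoeff w = 0)
    (f : PowerSeries K) {n m : ℕ} (h : n < m) :
    coeff n (substFun w f) = coeff n (Polynomial.aeval w (trunc m f)) := by
  rw [coeff_substFun, coeff_aeval hw]
  apply Finset.sum_congr rfl
  intro j hj; rw [Finset.mem_range] at hj
  rw [coeff_trunc, if_pos (by omega)]

theorem substFun_mul {w : PowerSeries K} (hw : constantCoeff w = 0) (f₁ f₂ : PowerSeries K) :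
    substFun w (f₁ * f₂) = substFun w f₁ * substFun w f₂ := by
  ext n
  have h1 : coeff n (substFun w (f₁ * f₂)) =
      coeff n (Polynomial.aeval w (trunc (n+1) f₁ * trunc (n+1) f₂)) := by
    rw [coeff_substFun, coeff_aeval hw]
    apply Finset.sum_congr rfl
    intro j hj; rw [Finset.mem_range] at hj
    congr 1
    rw [Polynomial.coeff_mul, PowerSeries.coeff_mul]
    apply Finset.sum_congr rfl
    rintro ⟨a, b⟩ hab
    rw [Finset.HasAntidiagonal.mem_antidiagonal] at hab
    rw [coeff_trunc, coeff_trunc, if_pos (by omega), if_pos (by omega)]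
  rw [h1, map_mul, PowerSeries.coeff_mul, PowerSeries.coeff_mul]
  apply Finset.sum_congr rfl
  rintro ⟨a, b⟩ hab
  rw [Finset.HasAntidiagonal.mem_antidiagonal] at hab
  congr 1
  · rw [coeff_substFun_trunc hw f₁ (show a < n+1 by omega)]
  · rw [coeff_substFun_trunc hw f₂ (show b < n+1 by omega)]

theorem substFun_C {w : PowerSeries K} (a : K) :
    substFun w (C a) = C a := by
  ext n
  rw [coeff_substFun, Finset.sum_eq_single 0]
  · simp [coeff_C]
  · intro j _ hj
    rw [coeff_C, if_neg hj, zero_mul]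
  · intro h; exact absurd (Finset.mem_range.mpr (by omega)) h

theorem substFun_one (w : PowerSeries K) : substFun w 1 = 1 := by
  have := substFun_C (w := w) (1 : K); simpa using this

theorem substFun_add (w f₁ f₂ : PowerSeries K) :
    substFun w (f₁ + f₂) = substFun w f₁ + substFun w f₂ := by
  ext n
  simp [coeff_substFun, Finset.sum_add_distrib, add_mul]

noncomputable def substHom {w : PowerSeries K} (hw : constantCoeff w = 0) :
    PowerSeries K →ₐ[K] PowerSeries K where
  toFun := substFun w
  map_one' := substFun_one w
  map_mul' := substFun_mul hw
  map_zero' := by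
    have := substFun_C (w := w) (0 : K); simpa using this
  map_add' := substFun_add w
  commutes' := fun a => substFun_C a

theorem substHom_apply {w : PowerSeries K} (hw : constantCoeff w = 0) (f : PowerSeries K) :
    substHom hw f = substFun w f := rfl

theorem substFun_injective {w : PowerSeries K} (hw : constantCoeff w = 0)
    (hw1 : coeff 1 w ≠ 0) : Function.Injective (substFun w) := by
  intro f₁ f₂ h
  ext n
  induction n using Nat.strong_induction_on with
  | _ n ih =>
    have hcc := congrArg (coeff n) h
    rw [coeff_substFun, coeff_substFun, Finset.sum_range_succ, Finset.sum_range_succ] at hcc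
    have hsums : ∑ j ∈ Finset.range n, coeff j f₁ * coeff n (w ^ j)
        = ∑ j ∈ Finset.range n, coeff j f₂ * coeff n (w ^ j) :=
      Finset.sum_congr rfl fun j hj => by rw [ih j (Finset.mem_range.mp hj)]
    rw [hsums] at hcc
    have h2 := add_left_cancel hcc
    rw [coeff_pow_self hw] at h2
    exact mul_right_cancel₀ (pow_ne_zero n hw1) h2

noncomputable def invCoeff (w h : PowerSeries K) : ℕ → K
  | n => (coeff n h - ∑ j ∈ (Finset.range n).attach,
      invCoeff w h j.1 * coeff n (w ^ j.1)) * ((coeff 1 w) ^ n)⁻¹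
  decreasing_by exact Finset.mem_range.mp j.2

theorem substFun_surjective {w : PowerSeries K} (hw : constantCoeff w = 0)
    (hw1 : coeff 1 w ≠ 0) : Function.Surjective (substFun w) := by
  intro h
  refine ⟨PowerSeries.mk (invCoeff w h), ?_⟩
  ext n
  rw [coeff_substFun, Finset.sum_range_succ]
  have ha : invCoeff w h n = (coeff n h - ∑ j ∈ (Finset.range n).attach,
      invCoeff w h j.1 * coeff n (w ^ j.1)) * ((coeff 1 w) ^ n)⁻¹ := by
    rw [invCoeff]
  have hsum : ∑ j ∈ Finset.range n, coeff j (PowerSeries.mk (invCoeff w h)) * coeff n (w ^ j)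
      = ∑ j ∈ (Finset.range n).attach, invCoeff w h j.1 * coeff n (w ^ j.1) := by
    rw [← Finset.sum_attach (Finset.range n)
      (fun j => coeff j (PowerSeries.mk (invCoeff w h)) * coeff n (w ^ j))]
    apply Finset.sum_congr rfl; intro j _; rw [coeff_mk]
  rw [hsum, coeff_mk, ha, coeff_pow_self hw, inv_mul_cancel_right₀ (pow_ne_zero n hw1)]
  ring

noncomputable def substEquiv {w : PowerSeries K} (hw : constantCoeff w = 0)
    (hw1 : coeff 1 w ≠ 0) : PowerSeries K ≃ₐ[K] PowerSeries K :=
  AlgEquiv.ofBijective (substHom hw) ⟨substFun_injective hw hw1, substFun_surjective hw hw1⟩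

theorem substEquiv_apply {w : PowerSeries K} (hw : constantCoeff w = 0)
    (hw1 : coeff 1 w ≠ 0) (f : PowerSeries K) : substEquiv hw hw1 f = substFun w f := rfl


/-- the perturbation polynomial -/
noncomputable def pert (f h : PowerSeries K) (t n : ℕ) : Polynomial K :=
  ∑ m ∈ Finset.range (n + 1), ∑ kk ∈ Finset.range (m + 1),
    Polynomial.C (coeff m f * (m.choose kk) *
      (if (m - kk) * t ≤ n then coeff (n - (m - kk) * t) (h ^ kk) else 0)) *
      Polynomial.X ^ (m - kk)

theorem eval_pert (f h : PowerSeries K) (t n : ℕ) (x : K) :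
    (pert f h t n).eval x = coeff n (substFun (h + C x * X ^ t) f) := by
  rw [coeff_substFun, pert]
  rw [Polynomial.eval_finset_sum]
  apply Finset.sum_congr rfl
  intro m _
  rw [Polynomial.eval_finset_sum]
  have hpow : (h + C x * X ^ t) ^ m
      = ∑ kk ∈ Finset.range (m + 1), h ^ kk * (C x * X ^ t) ^ (m - kk) * (m.choose kk : PowerSeries K) := by
    exact add_pow h (C x * X ^ t) m
  rw [hpow, map_sum, Finset.mul_sum]
  apply Finset.sum_congr rfl
  intro kk _
  have h1 : h ^ kk * (C x * X ^ t) ^ (m - kk) * (m.choose kk : PowerSeries K)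
      = C (x ^ (m - kk) * (m.choose kk : K)) * (X ^ ((m - kk) * t) * h ^ kk) := by
    have hc : ((m.choose kk : ℕ) : PowerSeries K) = C ((m.choose kk : ℕ) : K) := by
      rw [map_natCast]
    rw [mul_pow, ← map_pow, ← pow_mul, hc, map_mul]
    ring
  rw [h1, coeff_C_mul, coeff_X_pow_mul']
  rw [Polynomial.eval_mul, Polynomial.eval_C, Polynomial.eval_pow, Polynomial.eval_X]
  split_ifs <;> ring

theorem coeff_pert (f h : PowerSeries K) (t n i : ℕ) (hi : 1 ≤ i) :
    (pert f h t n).coeff i = ∑ m ∈ Finset.range (n + 1),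
      if i ≤ m then coeff m f * (m.choose (m - i)) *
        (if i * t ≤ n then coeff (n - i * t) (h ^ (m - i)) else 0) else 0 := by
  rw [pert, Polynomial.finset_sum_coeff]
  apply Finset.sum_congr rfl
  intro m _
  rw [Polynomial.finset_sum_coeff]
  rcases le_or_gt i m with him | him
  · rw [if_pos him, Finset.sum_eq_single (m - i)]
    · rw [Polynomial.coeff_C_mul_X_pow, if_pos (by omega)]
      have : m - (m - i) = i := by omega
      rw [this]
    · intro kk hkk hne
      rw [Polynomial.coeff_C_mul_X_pow, if_neg ?_]
      rw [Finset.mem_range] at hkk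
      omega
    · intro hmem; exact absurd (Finset.mem_range.mpr (by omega)) hmem
  · rw [if_neg (by omega)]
    apply Finset.sum_eq_zero
    intro kk hkk
    rw [Polynomial.coeff_C_mul_X_pow, if_neg (by omega)]

theorem coeff_one_pert (p q : ℕ) (hp : p.Prime) [CharP K p] (f h : PowerSeries K)
    (hsupp : ∀ m, coeff m f ≠ 0 → p ∣ m ∨ q ≤ m) (hq1 : 1 ≤ q)
    (h0 : constantCoeff h = 0) (n t : ℕ) (ht : t = n + 1 - q) (hqn : q ≤ n) :
    (pert f h t n).coeff 1 = coeff q f * q * (coeff 1 h) ^ (q - 1) := by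
  rw [coeff_pert f h t n 1 le_rfl]
  have htn : 1 * t ≤ n := by omega
  have hnt : n - 1 * t = q - 1 := by omega
  rw [Finset.sum_eq_single q]
  · rw [if_pos hq1, if_pos htn, hnt]
    have hch : q.choose (q - 1) = q := by
      rw [Nat.choose_symm (show 1 ≤ q by omega), Nat.choose_one_right]
    rw [hch, coeff_pow_self h0]
  · intro m _ hne
    rcases lt_or_ge m 1 with hm | hm
    · rw [if_neg (by omega)]
    rw [if_pos hm]
    by_cases hdvd : p ∣ m
    · have hch : m.choose (m - 1) = m := by
        rw [Nat.choose_symm (show 1 ≤ m by omega), Nat.choose_one_right]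
      rw [hch, (CharP.cast_eq_zero_iff K p m).mpr hdvd]
      ring
    · by_cases hcm : coeff m f = 0
      · rw [hcm]; ring
      · have hqm : q ≤ m := (hsupp m hcm).resolve_left hdvd
        have hqm' : q < m := lt_of_le_of_ne hqm (Ne.symm hne)
        rw [if_pos htn, hnt, coeff_pow_eq_zero h0 (by omega)]
        ring
  · intro hmem; exact absurd (Finset.mem_range.mpr (by omega)) hmem

theorem coeff_p_pert (p : ℕ) (hp : 1 ≤ p) (f h : PowerSeries K)
    (h0 : constantCoeff h = 0) (n t : ℕ) (ht : n = p * t) (ht1 : 1 ≤ t) :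
    (pert f h t n).coeff p = coeff p f := by
  rw [coeff_pert f h t n p hp]
  have hpn : p ≤ n := by
    rw [ht]; exact Nat.le_mul_of_pos_right p (by omega)
  have hcz : ∀ j : ℕ, 1 ≤ j → coeff 0 (h ^ j) = 0 := by
    intro j hj
    rw [coeff_zero_eq_constantCoeff, map_pow, h0, zero_pow (by omega)]
  rw [Finset.sum_eq_single p]
  · rw [if_pos le_rfl, if_pos (by omega), Nat.sub_self, ht, Nat.sub_self]
    simp
  · intro m _ hne
    rcases lt_or_ge m p with hm | hm
    · rw [if_neg (by omega)]
    rw [if_pos hm, if_pos (by omega), ht, Nat.sub_self, hcz (m - p) (by omega)]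
    ring
  · intro hmem; exact absurd (Finset.mem_range.mpr (by omega)) hmem

theorem exists_root_eval_zero [IsAlgClosed K] {P : Polynomial K} {i : ℕ} (hi : 1 ≤ i)
    (hc : P.coeff i ≠ 0) : ∃ x : K, P.eval x = 0 := by
  have hdeg : P.degree ≠ 0 := by
    intro h0
    have hle := Polynomial.le_degree_of_ne_zero hc
    rw [h0] at hle
    have : i ≤ 0 := by exact_mod_cast hle
    omega
  obtain ⟨x, hx⟩ := IsAlgClosed.exists_root P hdeg
  exact ⟨x, hx⟩

theorem coeff_subst_vanish (p q : ℕ) (hp : p.Prime) [CharP K p] (f w : PowerSeries K)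
    (hsupp : ∀ m, coeff m f ≠ 0 → p ∣ m ∨ q ≤ m) (hf0 : coeff 0 f = 0)
    (hw : constantCoeff w = 0) (n : ℕ) (hpn : ¬ p ∣ n) (hnq : n < q) :
    coeff n (substFun w f) = 0 := by
  rw [coeff_substFun]
  apply Finset.sum_eq_zero
  intro j hj
  rw [Finset.mem_range] at hj
  by_cases hcj : coeff j f = 0
  · rw [hcj, zero_mul]
  rcases hsupp j hcj with hdvd | hqj
  · have hj1 : 1 ≤ j := by
      rcases Nat.eq_zero_or_pos j with rfl | h
      · exact absurd hf0 hcj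
      · exact h
    have hj' : j = (j / p) * p := (Nat.div_mul_cancel hdvd).symm
    rw [hj', pow_mul, coeff_pow_char p hp n (w ^ (j / p)), if_neg hpn, mul_zero]
  · exact absurd hqj (by omega)

theorem coeff_subst_congr (p q : ℕ) (hp : p.Prime) [CharP K p] (f w₁ w₂ : PowerSeries K)
    (hsupp : ∀ m, coeff m f ≠ 0 → p ∣ m ∨ q ≤ m) (hf0 : coeff 0 f = 0)
    (h0 : constantCoeff w₁ = 0) (h0' : constantCoeff w₂ = 0) (n T : ℕ)
    (hT : T = if p ∣ n then max (n + 1 - q) (n / p) else n + 1 - q)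
    (hag : ∀ s ≤ T, coeff s w₁ = coeff s w₂) :
    coeff n (substFun w₁ f) = coeff n (substFun w₂ f) := by
  rw [coeff_substFun, coeff_substFun]
  apply Finset.sum_congr rfl
  intro j hj
  rw [Finset.mem_range] at hj
  by_cases hcj : coeff j f = 0
  · rw [hcj, zero_mul, zero_mul]
  congr 1
  rcases hsupp j hcj with hdvd | hqj
  · have hj1 : 1 ≤ j := by
      rcases Nat.eq_zero_or_pos j with rfl | h
      · exact absurd hf0 hcj
      · exact h
    have hj' : j = (j / p) * p := (Nat.div_mul_cancel hdvd).symm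
    have hpj : p ≤ j := Nat.le_of_dvd (by omega) hdvd
    have hj'1 : 1 ≤ j / p := (Nat.one_le_div_iff hp.pos).mpr hpj
    have hjn : j / p ≤ n / p := Nat.div_le_div_right (by omega)
    rw [hj', pow_mul, pow_mul, coeff_pow_char p hp n (w₁ ^ (j / p)),
      coeff_pow_char p hp n (w₂ ^ (j / p))]
    by_cases hpn : p ∣ n
    · rw [if_pos hpn, if_pos hpn]
      have := coeff_pow_congr h0 h0' (j / p) (n / p) hj'1 (fun s hs => hag s ?_)
      · rw [this]
      · have h1 : s ≤ n / p := by omega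
        have h2 : n / p ≤ T := by rw [hT, if_pos hpn]; omega
        omega
    · rw [if_neg hpn, if_neg hpn]
  · have hq1 : 1 ≤ j := by
      have : q ≤ j := hqj
      rcases Nat.eq_zero_or_pos j with rfl | h
      · exact absurd hf0 hcj
      · exact h
    apply coeff_pow_congr h0 h0' j n hq1
    intro s hs
    apply hag
    have : n + 1 - q ≤ T := by
      rw [hT]; split_ifs
      · omega
      · omega
    omega

noncomputable def crec (f : PowerSeries K) (c1 : K) (pqn : ℕ → ℕ) : ℕ → K
  | t =>
    if t = 0 then 0
    else if t = 1 then c1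
    else
      Classical.epsilon (fun x : K => (pert f (PowerSeries.mk
        (fun s => if hs : s < t then crec f c1 pqn s else 0)) t (pqn t)).eval x = 0)
  decreasing_by exact hs

theorem crec_zero (f : PowerSeries K) (c1 : K) (pqn : ℕ → ℕ) : crec f c1 pqn 0 = 0 := by
  rw [crec]; norm_num

theorem crec_one (f : PowerSeries K) (c1 : K) (pqn : ℕ → ℕ) : crec f c1 pqn 1 = c1 := by
  rw [crec]; norm_num

theorem crec_step (f : PowerSeries K) (c1 : K) (pqn : ℕ → ℕ) (t : ℕ) (ht : 2 ≤ t)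
    (hex : ∃ x : K, (pert f (PowerSeries.mk
        (fun s => if hs : s < t then crec f c1 pqn s else 0)) t (pqn t)).eval x = 0) :
    (pert f (PowerSeries.mk (fun s => if hs : s < t then crec f c1 pqn s else 0))
        t (pqn t)).eval (crec f c1 pqn t) = 0 := by
  have h1 : crec f c1 pqn t = Classical.epsilon (fun x : K => (pert f (PowerSeries.mk
      (fun s => if hs : s < t then crec f c1 pqn s else 0)) t (pqn t)).eval x = 0) := by
    rw [crec, if_neg (by omega), if_neg (by omega)]
  rw [h1]
  exact Classical.epsilon_spec hex

end NF
noncomputable def milnor (K : Type*) [Field K] (f : PowerSeries K) : ℕ :=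
  Module.finrank K (PowerSeries K ⧸ Ideal.span {f.derivativeFun})

def MilnorFinite (K : Type*) [Field K] (f : PowerSeries K) : Prop :=
  Module.Finite K (PowerSeries K ⧸ Ideal.span {f.derivativeFun})

def RightEquiv (K : Type*) [Field K] (f g : PowerSeries K) : Prop :=
  ∃ Φ : PowerSeries K ≃ₐ[K] PowerSeries K, Φ f = g

theorem stmt_11 (K : Type*) [Field K] [IsAlgClosed K] (p : ℕ) (hp : p.Prime) [CharP K p]
    (f : PowerSeries K) (hf0 : constantCoeff f = 0) (hfin : MilnorFinite K f)
    (hm : coeff p f ≠ 0) (hmin : ∀ i < p, coeff i f = 0)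
    (q k d : ℕ) (hq : q = milnor K f + 1)
    (hq' : q = sInf {n | coeff n f ≠ 0 ∧ ¬ p ∣ n})
    (hk : k = (q - p + (p - 1) - 1) / (p - 1)) (hd : d = q + k - 1) :
    (∃ lam : ℕ → K, RightEquiv K f
        (X ^ p + ∑ n ∈ (Finset.Icc q d).filter (fun n => ¬ p ∣ n), C (lam n) * X ^ n)) ∧
      ((Finset.Icc q d).filter fun n => ¬ p ∣ n).card = q / p ∧
      q / p = milnor K f / p := by
  -- ## basic facts
  have hp2 : 2 ≤ p := hp.two_le
  have hq1 : 1 ≤ q := by omega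
  have hSne : {n | coeff n f ≠ 0 ∧ ¬ p ∣ n}.Nonempty := by
    by_contra hne
    rw [Set.not_nonempty_iff_eq_empty] at hne
    rw [hne, Nat.sInf_empty] at hq'
    omega
  have hqS : q ∈ {n | coeff n f ≠ 0 ∧ ¬ p ∣ n} := by
    rw [hq']; exact Nat.sInf_mem hSne
  obtain ⟨haq, hqnd⟩ := hqS
  have hsupp : ∀ m, coeff m f ≠ 0 → p ∣ m ∨ q ≤ m := by
    intro m hcm
    by_contra hcon
    push_neg at hcon
    obtain ⟨h1, h2⟩ := hcon
    have hmem : m ∈ {n | coeff n f ≠ 0 ∧ ¬ p ∣ n} := ⟨hcm, h1⟩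
    have := Nat.sInf_le hmem
    omega
  have hpq : p < q := by
    have h1 : p ≤ q := le_of_not_gt (fun h => haq (hmin q h))
    rcases eq_or_lt_of_le h1 with h | h
    · exact absurd (h ▸ dvd_refl p) hqnd
    · exact h
  have hf00 : coeff 0 f = 0 := by
    rw [coeff_zero_eq_constantCoeff]; exact hf0
  -- ## k arithmetic
  have hk2 : k = (q - 2) / (p - 1) := by rw [hk]; congr 1; omega
  have hkb := Nat.div_add_mod (q - 2) (p - 1)
  rw [← hk2] at hkb
  have hkm : (q - 2) % (p - 1) < p - 1 := Nat.mod_lt _ (by omega)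
  have hk1 : 1 ≤ k := by
    rcases Nat.eq_zero_or_pos k with h0 | h0
    · rw [h0, Nat.mul_zero] at hkb; omega
    · exact h0
  have hbrk : (p - 1) * k + k = p * k := by
    have h1 : p - 1 + 1 = p := by omega
    calc (p - 1) * k + k = ((p - 1) + 1) * k := by ring
    _ = p * k := by rw [h1]
  -- ## the root c1 of the leading coefficient
  obtain ⟨c1, hc1⟩ := IsAlgClosed.exists_pow_nat_eq ((coeff p f)⁻¹) hp.pos
  have hc1ne : c1 ≠ 0 := by
    intro h
    rw [h, zero_pow hp.pos.ne'] at hc1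
    exact inv_ne_zero hm hc1.symm
  -- ## the coordinate change
  set pqn : ℕ → ℕ := fun t => if (p - 1) * t < q - 1 then p * t else q + t - 1 with hpqn
  set w : PowerSeries K := PowerSeries.mk (NF.crec f c1 pqn) with hwdef
  have hcw : ∀ s, coeff s w = NF.crec f c1 pqn s := fun s => coeff_mk s _
  have hw0 : constantCoeff w = 0 := by
    rw [← coeff_zero_eq_constantCoeff, hcw 0, NF.crec_zero]
  have hw1 : coeff 1 w = c1 := by rw [hcw 1, NF.crec_one]
  have hw1ne : coeff 1 w ≠ 0 := by rw [hw1]; exact hc1ne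
  -- ## the inductive step : all assigned coefficients vanish
  have hstep : ∀ t, 2 ≤ t → coeff (pqn t) (NF.substFun w f) = 0 := by
    intro t ht2
    set H : PowerSeries K :=
      PowerSeries.mk (fun s => if hs : s < t then NF.crec f c1 pqn s else 0) with hHdef
    have hcH : ∀ s, coeff s H = if s < t then NF.crec f c1 pqn s else 0 := by
      intro s; rw [hHdef, coeff_mk, dite_eq_ite]
    have hH0 : constantCoeff H = 0 := by
      rw [← coeff_zero_eq_constantCoeff, hcH 0, if_pos (by omega), NF.crec_zero]
    have hH1 : coeff 1 H = c1 := by rw [hcH 1, if_pos (by omega), NF.crec_one]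
    set n := pqn t with hn
    -- arithmetic bridges
    have hbrt : (p - 1) * t + t = p * t := by
      have h1 : p - 1 + 1 = p := by omega
      calc (p - 1) * t + t = ((p - 1) + 1) * t := by ring
      _ = p * t := by rw [h1]
    have hex : ∃ x : K, (NF.pert f H t n).eval x = 0 := by
      by_cases hcase : (p - 1) * t < q - 1
      · have hnpt : n = p * t := by rw [hn, hpqn]; simp only [if_pos hcase]
        have hne : (NF.pert f H t n).coeff p ≠ 0 := by
          rw [NF.coeff_p_pert p (by omega) f H hH0 n t hnpt (by omega)]
          exact hm
        exact NF.exists_root_eval_zero (by omega) hne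
      · have hnqt : n = q + t - 1 := by rw [hn, hpqn]; simp only [if_neg hcase]
        have hne : (NF.pert f H t n).coeff 1 ≠ 0 := by
          rw [NF.coeff_one_pert p q hp f H hsupp hq1 hH0 n t (by omega) (by omega)]
          apply mul_ne_zero (mul_ne_zero haq ?_)
          · rw [hH1]; exact pow_ne_zero _ hc1ne
          · intro hq0
            exact hqnd ((CharP.cast_eq_zero_iff K p q).mp hq0)
        exact NF.exists_root_eval_zero le_rfl hne
    have hroot : (NF.pert f H t n).eval (NF.crec f c1 pqn t) = 0 :=
      NF.crec_step f c1 pqn t ht2 hex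
    have heval : coeff n (NF.substFun (H + C (NF.crec f c1 pqn t) * X ^ t) f) = 0 := by
      rw [← NF.eval_pert]; exact hroot
    -- the modified series agrees with w up to degree t
    have hagree : ∀ s ≤ t, coeff s w = coeff s (H + C (NF.crec f c1 pqn t) * X ^ t) := by
      intro s hs
      rw [map_add, coeff_C_mul, coeff_X_pow, hcH s, hcw s]
      rcases lt_or_ge s t with h | h
      · rw [if_pos h, if_neg (by omega), mul_zero, add_zero]
      · have hst : s = t := by omega
        rw [hst, if_neg (by omega), if_pos rfl, mul_one, zero_add]
    have hH0' : constantCoeff (H + C (NF.crec f c1 pqn t) * X ^ t) = 0 := by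
      rw [map_add, hH0, zero_add, ← coeff_zero_eq_constantCoeff, coeff_C_mul, coeff_X_pow,
        if_neg (by omega), mul_zero]
    -- T = t
    have hTeq : t = if p ∣ n then max (n + 1 - q) (n / p) else n + 1 - q := by
      by_cases hcase : (p - 1) * t < q - 1
      · have hnpt : n = p * t := by rw [hn, hpqn]; simp only [if_pos hcase]
        have hdvd : p ∣ n := ⟨t, hnpt⟩
        have hdiv : n / p = t := by rw [hnpt, Nat.mul_div_cancel_left t hp.pos]
        rw [if_pos hdvd, hdiv, Nat.max_eq_right (by omega)]
      · have hnqt : n = q + t - 1 := by rw [hn, hpqn]; simp only [if_neg hcase]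
        have h1 : n + 1 - q = t := by omega
        by_cases hdvd : p ∣ n
        · have hle : n ≤ p * t := by omega
          have hdiv : n / p ≤ t := by
            have := Nat.div_le_div_right (c := p) hle
            rwa [Nat.mul_div_cancel_left t hp.pos] at this
          rw [if_pos hdvd, h1, Nat.max_eq_left hdiv]
        · rw [if_neg hdvd, h1]
    rw [NF.coeff_subst_congr p q hp f w (H + C (NF.crec f c1 pqn t) * X ^ t) hsupp hf00 hw0
      hH0' n t hTeq hagree]
    exact heval
  -- ## coverage : every bad exponent is assigned to some step
  have hcover : ∀ N, p < N → (p ∣ N ∨ d < N) → ∃ t, 2 ≤ t ∧ pqn t = N := by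
    intro N hpN hcases
    by_cases hdvd : p ∣ N
    · obtain ⟨u, hNu⟩ := hdvd
      have hu2 : 2 ≤ u := by
        rcases Nat.lt_or_ge u 2 with h | h
        · interval_cases u
          · rw [Nat.mul_zero] at hNu; omega
          · rw [Nat.mul_one] at hNu; omega
        · exact h
      have hbru : (p - 1) * u + u = p * u := by
        have h1 : p - 1 + 1 = p := by omega
        calc (p - 1) * u + u = ((p - 1) + 1) * u := by ring
        _ = p * u := by rw [h1]
      rcases Nat.lt_or_ge ((p - 1) * u) (q - 1) with hlt | hge
      · exact ⟨u, hu2, by rw [hpqn]; simp only [if_pos hlt]; omega⟩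
      · rcases le_or_gt (N + 1 - q) u with hle | hgt
        · -- then u = N + 1 - q, use t := u with second branch
          have hueq : q + u - 1 = N := by omega
          exact ⟨u, hu2, by rw [hpqn]; simp only [if_neg (by omega : ¬ (p - 1) * u < q - 1)]; omega⟩
        · set t := N + 1 - q with htdef
          have ht2 : 2 ≤ t := by omega
          have hbrt : (p - 1) * t + t = p * t := by
            have h1 : p - 1 + 1 = p := by omega
            calc (p - 1) * t + t = ((p - 1) + 1) * t := by ring
            _ = p * t := by rw [h1]
          have hnot : ¬ (p - 1) * t < q - 1 := by
            intro hlt'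
            have hptN : p * t < N := by omega
            have hptu : p * t < p * u := by omega
            have htu : t < u := Nat.lt_of_mul_lt_mul_left hptu
            omega
          exact ⟨t, ht2, by rw [hpqn]; simp only [if_neg hnot]; omega⟩
    · have hdN : d < N := hcases.resolve_left hdvd
      set t := N + 1 - q with htdef
      have ht2 : 2 ≤ t := by omega
      have htk : k + 1 ≤ t := by omega
      have hmono : (p - 1) * (k + 1) ≤ (p - 1) * t := Nat.mul_le_mul_left _ htk
      have hexp : (p - 1) * (k + 1) = (p - 1) * k + (p - 1) := by ring
      have hnot : ¬ (p - 1) * t < q - 1 := by omega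
      exact ⟨t, ht2, by rw [hpqn]; simp only [if_neg hnot]; omega⟩
  -- ## the normal form equality
  set lam : ℕ → K := fun n => coeff n (NF.substFun w f) with hlam
  have hmemL : ∀ N, N ∈ (Finset.Icc q d).filter (fun n => ¬ p ∣ n) ↔
      (q ≤ N ∧ N ≤ d ∧ ¬ p ∣ N) := by
    intro N
    rw [Finset.mem_filter, Finset.mem_Icc]
    tauto
  have hmain : NF.substFun w f =
      X ^ p + ∑ n ∈ (Finset.Icc q d).filter (fun n => ¬ p ∣ n), C (lam n) * X ^ n := by
    ext N
    have hRHS : coeff N (X ^ p + ∑ n ∈ (Finset.Icc q d).filter (fun n => ¬ p ∣ n),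
        C (lam n) * X ^ n) = (if N = p then 1 else 0) +
        (if N ∈ (Finset.Icc q d).filter (fun n => ¬ p ∣ n) then lam N else 0) := by
      rw [map_add, coeff_X_pow, map_sum]
      congr 1
      rw [Finset.sum_congr rfl (fun n _ => by
        rw [coeff_C_mul, coeff_X_pow, mul_ite, mul_one, mul_zero])]
      exact Finset.sum_ite_eq _ N lam
    rw [hRHS]
    by_cases hNmem : N ∈ (Finset.Icc q d).filter (fun n => ¬ p ∣ n)
    · obtain ⟨hq1', hq2', hq3'⟩ := (hmemL N).mp hNmem
      rw [if_pos hNmem, if_neg (by omega), zero_add]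
    · rw [if_neg hNmem]
      rcases lt_trichotomy N p with hlt | heq | hgt
      · rw [if_neg (by omega), add_zero, NF.coeff_substFun]
        apply Finset.sum_eq_zero
        intro j hj
        rw [Finset.mem_range] at hj
        rw [hmin j (by omega), zero_mul]
      · rw [if_pos heq, add_zero, NF.coeff_substFun, heq, Finset.sum_eq_single p]
        · rw [NF.coeff_pow_self hw0, hw1, hc1, mul_inv_cancel₀ hm]
        · intro j hj hne
          rw [Finset.mem_range] at hj
          rw [hmin j (by omega), zero_mul]
        · intro hmem; exact absurd (Finset.mem_range.mpr (by omega)) hmem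
      · rw [if_neg (by omega), add_zero]
        by_cases hdvd : p ∣ N
        · obtain ⟨t, ht2, hteq⟩ := hcover N hgt (Or.inl hdvd)
          rw [← hteq]; exact hstep t ht2
        · rcases Nat.lt_or_ge N q with hNq | hNq
          · exact NF.coeff_subst_vanish p q hp f w hsupp hf00 hw0 N hdvd hNq
          · have hNd : d < N := by
              rcases Nat.lt_or_ge d N with h | h
              · exact h
              · exact absurd ((hmemL N).mpr ⟨hNq, h, hdvd⟩) hNmem
            obtain ⟨t, ht2, hteq⟩ := hcover N hgt (Or.inr hNd)
            rw [← hteq]; exact hstep t ht2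
  -- ## part 1
  refine ⟨⟨lam, NF.substEquiv hw0 hw1ne, hmain⟩, ?_, ?_⟩
  -- ## card computation
  · have hqd : q - 1 ≤ d := by omega
    have hicc : Finset.Icc q d = Finset.Ioc (q - 1) d := by
      rw [← Finset.Icc_add_one_left_eq_Ioc]
      congr 1
      omega
    have hsplitI : Finset.Ioc 0 (q - 1) ∪ Finset.Ioc (q - 1) d = Finset.Ioc 0 d :=
      Finset.Ioc_union_Ioc_eq_Ioc (Nat.zero_le _) hqd
    have hdisj : Disjoint ((Finset.Ioc 0 (q - 1)).filter (fun n => p ∣ n))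
        ((Finset.Ioc (q - 1) d).filter (fun n => p ∣ n)) := by
      rw [Finset.disjoint_left]
      intro a ha hb
      rw [Finset.mem_filter, Finset.mem_Ioc] at ha hb
      omega
    have hcard1 : ((Finset.Ioc 0 (q - 1)).filter (fun n => p ∣ n)).card +
        ((Finset.Ioc (q - 1) d).filter (fun n => p ∣ n)).card =
        ((Finset.Ioc 0 d).filter (fun n => p ∣ n)).card := by
      rw [← Finset.card_union_of_disjoint hdisj, ← Finset.filter_union, hsplitI]
    rw [Nat.Ioc_filter_dvd_card_eq_div, Nat.Ioc_filter_dvd_card_eq_div] at hcard1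
    have hcard2 := Finset.card_filter_add_card_filter_not
      (s := Finset.Ioc (q - 1) d) (p := fun n => p ∣ n)
    rw [Nat.card_Ioc] at hcard2
    have hr : d = p * k + ((q - 2) % (p - 1) + 1) := by omega
    have hdp : d / p = k := by
      rw [hr, Nat.mul_add_div hp.pos, Nat.div_eq_of_lt (by omega), add_zero]
    have hqp1 : (q - 1) / p ≤ k := by
      rw [← hdp]; exact Nat.div_le_div_right (by omega)
    have hsd : q / p = (q - 1) / p := by
      have h1 : q = (q - 1) + 1 := by omega
      rw [h1, Nat.succ_div, if_neg (by rw [← h1]; exact hqnd), add_zero, Nat.add_sub_cancel]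
    rw [hicc]
    omega
  -- ## q / p = milnor / p
  · have hdp' : q / p = (q - 1) / p := by
      have h1 : q = (q - 1) + 1 := by omega
      rw [h1, Nat.succ_div, if_neg (by rw [← h1]; exact hqnd), add_zero, Nat.add_sub_cancel]
    have hmil : milnor K f = q - 1 := by omega
    rw [hmil]
    exact hdp'
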